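/- Let N ≥ 4 and let H be the N×N real symmetric matrix with entries H_{ij} = −cos(2π(i−j)/N) − 1/(2 − 2cos(2π(i−j)/N)) for i ≠ j and H_{ii} = −∑_{j≠i} H_{ij}. For 0 ≤ j ≤ N−1 let v_j ∈ ℂ^N be the vector with components (v_j)_k = exp(2πi·jk/N), k = 0,…,N−1. Then v_j is an eigenvector of H (viewed as a complex matrix) with eigenvalue λ_j, where λ_0 = 0, λ_1 = λ_{N−1} = −1/2, and λ_j = b(j,N) := (1/2)·∑_{k=1}^{N−1} (1 − cos(2πjk/N))/(1 − cos(2πk/N)) > 0 for 2 ≤ j ≤ N−2. In particular H has exactly one zero eigenvalue, the eigenvalue −1/2 with multiplicity two, and N−3 strictly positive eigenvalues. -/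

import Mathlib

open Real Matrix Finset

/- ## Auxiliary lemmas -/

lemma ngon_cos_int_congr (N : ℕ) (hN : N ≠ 0) (a b : ℤ) (h : (N:ℤ) ∣ (a - b)) :
    Real.cos (2 * π * a / N) = Real.cos (2 * π * b / N) := by
  obtain ⟨t, ht⟩ := h
  have ha : (a : ℝ) = b + t * N := by
    have h2 : (a : ℝ) - b = N * t := by exact_mod_cast congrArg (fun z : ℤ => (z : ℝ)) ht
    linarith
  have hNne : (N:ℝ) ≠ 0 := Nat.cast_ne_zero.mpr hN
  rw [ha]
  have : 2 * π * ((b:ℝ) + t * N) / N = 2 * π * b / N + (t:ℝ) * (2 * π) := by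
    field_simp
  rw [this, Real.cos_add_int_mul_two_pi]

lemma ngon_sin_int_congr (N : ℕ) (hN : N ≠ 0) (a b : ℤ) (h : (N:ℤ) ∣ (a - b)) :
    Real.sin (2 * π * a / N) = Real.sin (2 * π * b / N) := by
  obtain ⟨t, ht⟩ := h
  have ha : (a : ℝ) = b + t * N := by
    have h2 : (a : ℝ) - b = N * t := by exact_mod_cast congrArg (fun z : ℤ => (z : ℝ)) ht
    linarith
  have hNne : (N:ℝ) ≠ 0 := Nat.cast_ne_zero.mpr hN
  rw [ha]
  have : 2 * π * ((b:ℝ) + t * N) / N = 2 * π * b / N + (t:ℝ) * (2 * π) := by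
    field_simp
  rw [this, Real.sin_add_int_mul_two_pi]

lemma ngon_exp_int_congr (N : ℕ) (hN : N ≠ 0) (a b : ℤ) (h : (N:ℤ) ∣ (a - b)) :
    Complex.exp (2 * π * Complex.I * a / N) = Complex.exp (2 * π * Complex.I * b / N) := by
  obtain ⟨t, ht⟩ := h
  have ha : (a : ℂ) = b + t * N := by
    have h2 : (a : ℂ) - b = N * t := by exact_mod_cast congrArg (fun z : ℤ => (z : ℂ)) ht
    linear_combination h2
  have hNne : (N:ℂ) ≠ 0 := Nat.cast_ne_zero.mpr hN
  rw [ha]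
  have : 2 * (π:ℂ) * Complex.I * ((b:ℂ) + t * N) / N
      = 2 * π * Complex.I * b / N + (t:ℂ) * (2 * π * Complex.I) := by
    field_simp
  rw [this, Complex.exp_add, Complex.exp_int_mul_two_pi_mul_I, mul_one]

lemma ngon_cos_ne_one (N : ℕ) (k : ℕ) (h0 : 0 < k) (h1 : k < N) :
    Real.cos (2 * π * k / N) ≠ 1 := by
  intro h
  obtain ⟨n, hn⟩ := (Real.cos_eq_one_iff _).mp h
  have hN0 : 0 < N := h0.trans h1
  have hNpos : (0:ℝ) < N := by exact_mod_cast hN0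
  have hpi : (0:ℝ) < π := Real.pi_pos
  have hr : (n : ℝ) * N = k := by
    field_simp at hn
    nlinarith [hn]
  have hk : (k:ℤ) = n * N := by exact_mod_cast hr.symm
  have hkp : (0:ℤ) < k := by exact_mod_cast h0
  have hkN : (k:ℤ) < N := by exact_mod_cast h1
  have hNZ : (0:ℤ) < N := by exact_mod_cast hN0
  rcases le_or_gt n 0 with hl | hg
  · nlinarith
  · have : (1:ℤ) ≤ n := hg
    nlinarith

lemma ngon_cos_lt_one (N : ℕ) (k : ℕ) (h0 : 0 < k) (h1 : k < N) :
    Real.cos (2 * π * k / N) < 1 :=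
  lt_of_le_of_ne (Real.cos_le_one _) (ngon_cos_ne_one N k h0 h1)

lemma ngon_exp_sum_geom (N : ℕ) (hN : 0 < N) (t : ℕ) :
    ∑ m ∈ Finset.range N, Complex.exp (2 * π * Complex.I * t * m / N)
      = if N ∣ t then (N:ℂ) else 0 := by
  have hNne : (N:ℂ) ≠ 0 := Nat.cast_ne_zero.mpr hN.ne'
  set z : ℂ := Complex.exp (2 * π * Complex.I * t / N) with hz
  have hterm : ∀ m : ℕ, Complex.exp (2 * π * Complex.I * t * m / N) = z ^ m := by
    intro m
    rw [hz, ← Complex.exp_nat_mul]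
    ring_nf
  rw [Finset.sum_congr rfl fun m _ => hterm m]
  have hzN : z ^ N = 1 := by
    rw [hz, ← Complex.exp_nat_mul]
    have : (N:ℂ) * (2 * π * Complex.I * t / N) = (t:ℂ) * (2 * π * Complex.I) := by
      field_simp
    rw [this]
    exact_mod_cast Complex.exp_int_mul_two_pi_mul_I t
  by_cases hdvd : N ∣ t
  · obtain ⟨s, hs⟩ := hdvd
    have hdvd' : N ∣ t := ⟨s, hs⟩
    have hz1 : z = 1 := by
      rw [hz]
      have : 2 * (π:ℂ) * Complex.I * t / N = (s:ℂ) * (2 * π * Complex.I) := by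
        rw [hs]; push_cast; field_simp
      rw [this]
      exact_mod_cast Complex.exp_int_mul_two_pi_mul_I s
    simp [hz1, hdvd']
  · have hz1 : z ≠ 1 := by
      intro h
      rw [hz, Complex.exp_eq_one_iff] at h
      obtain ⟨n, hn⟩ := h
      have hpi : (π:ℂ) ≠ 0 := Complex.ofReal_ne_zero.mpr Real.pi_ne_zero
      have h2 : (2:ℂ) * π * Complex.I ≠ 0 :=
        mul_ne_zero (mul_ne_zero two_ne_zero hpi) Complex.I_ne_zero
      have ht : (t : ℂ) = n * N := by
        field_simp at hn
        apply mul_left_cancel₀ h2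
        linear_combination (2 * π * Complex.I) * hn
      have ht' : (t:ℤ) = n * N := by exact_mod_cast ht
      exact hdvd (Int.natCast_dvd_natCast.mp ⟨n, by linarith [ht']⟩)
    rw [geom_sum_eq hz1, hzN]
    simp [if_neg hdvd]

lemma ngon_cos_sum_geom (N : ℕ) (hN : 0 < N) (t : ℕ) :
    ∑ m ∈ Finset.range N, Real.cos (2 * π * t * m / N)
      = if N ∣ t then (N:ℝ) else 0 := by
  have h := ngon_exp_sum_geom N hN t
  have hre : ∀ m : ℕ, Real.cos (2 * π * t * m / N)
      = (Complex.exp (2 * π * Complex.I * t * m / N)).re := by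
    intro m
    rw [show (2 * π * Complex.I * t * m / N : ℂ) = ((2 * π * t * m / N : ℝ) : ℂ) * Complex.I by
      push_cast; field_simp]
    rw [Complex.exp_ofReal_mul_I_re]
  rw [Finset.sum_congr rfl fun m _ => hre m, ← Complex.re_sum, h]
  split <;> simp

lemma ngon_cos_sum_Icc (N : ℕ) (hN : 0 < N) (t : ℕ) :
    ∑ m ∈ Finset.Icc 1 (N-1), Real.cos (2 * π * t * m / N)
      = (if N ∣ t then (N:ℝ) else 0) - 1 := by
  have hins : Finset.range N = insert 0 (Finset.Icc 1 (N-1)) := by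
    ext x; simp only [Finset.mem_range, Finset.mem_insert, Finset.mem_Icc]; omega
  have h := ngon_cos_sum_geom N hN t
  rw [hins, Finset.sum_insert (by simp)] at h
  simp only [Nat.cast_zero, mul_zero, zero_div, Real.cos_zero] at h
  linarith

lemma ngon_coscos (N j m : ℕ) (hN : 0 < N) (hj : 1 ≤ j) :
    Real.cos (2 * π * m / N) * Real.cos (2 * π * j * m / N)
      = (Real.cos (2 * π * (j-1:ℕ) * m / N) + Real.cos (2 * π * (j+1:ℕ) * m / N)) / 2 := by
  have hNne : (N:ℝ) ≠ 0 := Nat.cast_ne_zero.mpr hN.ne'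
  have hj1 : ((j-1:ℕ):ℝ) = (j:ℝ) - 1 := by
    have : (1:ℕ) ≤ j := hj
    push_cast [Nat.cast_sub this]; ring
  have e1 : 2 * π * ((j-1:ℕ):ℝ) * m / N = 2 * π * j * m / N - 2 * π * m / N := by
    rw [hj1]; field_simp
  have e2 : 2 * π * ((j+1:ℕ):ℝ) * m / N = 2 * π * j * m / N + 2 * π * m / N := by
    push_cast; field_simp
  rw [e1, e2, Real.cos_sub, Real.cos_add]; ring

lemma ngon_not_dvd_of_lt (N t : ℕ) (h0 : 0 < t) (h1 : t < N) : ¬ N ∣ t :=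
  fun h => absurd (Nat.le_of_dvd h0 h) (by omega)

lemma ngon_S1_val (N j : ℕ) (hN2 : 2 ≤ N) (hj : 1 ≤ j) :
    ∑ m ∈ Finset.Icc 1 (N-1), Real.cos (2 * π * m / N) * (1 - Real.cos (2 * π * j * m / N))
      = -1 - (((if N ∣ (j-1) then (N:ℝ) else 0) - 1) + ((if N ∣ (j+1) then (N:ℝ) else 0) - 1)) / 2 := by
  have hN0 : 0 < N := by omega
  have h1 : ∀ m ∈ Finset.Icc 1 (N-1),
      Real.cos (2 * π * m / N) * (1 - Real.cos (2 * π * j * m / N))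
        = Real.cos (2 * π * (1:ℕ) * m / N)
          - (Real.cos (2 * π * (j-1:ℕ) * m / N) + Real.cos (2 * π * (j+1:ℕ) * m / N)) / 2 := by
    intro m _
    rw [← ngon_coscos N j m hN0 hj]
    push_cast
    ring
  rw [Finset.sum_congr rfl h1]
  rw [Finset.sum_sub_distrib, ← Finset.sum_div, Finset.sum_add_distrib,
    ngon_cos_sum_Icc N hN0 1, ngon_cos_sum_Icc N hN0 (j-1), ngon_cos_sum_Icc N hN0 (j+1)]
  rw [if_neg (ngon_not_dvd_of_lt N 1 one_pos (by omega))]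
  ring

lemma ngon_S1_one (N j : ℕ) (hN : 4 ≤ N) (hj : j = 1 ∨ j = N - 1) :
    ∑ m ∈ Finset.Icc 1 (N-1), Real.cos (2 * π * m / N) * (1 - Real.cos (2 * π * j * m / N))
      = -(N:ℝ)/2 := by
  rcases hj with rfl | rfl
  · rw [ngon_S1_val N 1 (by omega) le_rfl]
    rw [if_pos (by simp), if_neg (ngon_not_dvd_of_lt N 2 (by omega) (by omega))]
    ring
  · rw [ngon_S1_val N (N-1) (by omega) (by omega)]
    rw [show N - 1 - 1 = N - 2 by omega, show N - 1 + 1 = N by omega]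
    rw [if_neg (ngon_not_dvd_of_lt N (N-2) (by omega) (by omega)), if_pos dvd_rfl]
    ring

lemma ngon_S1_mid (N j : ℕ) (hN : 4 ≤ N) (hj1 : 2 ≤ j) (hj2 : j ≤ N - 2) :
    ∑ m ∈ Finset.Icc 1 (N-1), Real.cos (2 * π * m / N) * (1 - Real.cos (2 * π * j * m / N))
      = 0 := by
  rw [ngon_S1_val N j (by omega) (by omega)]
  rw [if_neg (ngon_not_dvd_of_lt N (j-1) (by omega) (by omega)),
    if_neg (ngon_not_dvd_of_lt N (j+1) (by omega) (by omega))]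
  ring

lemma ngon_second_part (N j : ℕ) (hN : 4 ≤ N) :
    ∑ m ∈ Finset.Icc 1 (N-1),
        (1 / (2 - 2 * Real.cos (2 * π * m / N))) * (1 - Real.cos (2 * π * j * m / N))
      = (1/2) * ∑ m ∈ Finset.Icc 1 (N-1),
        (1 - Real.cos (2 * π * j * m / N)) / (1 - Real.cos (2 * π * m / N)) := by
  rw [Finset.mul_sum]
  apply Finset.sum_congr rfl
  intro m hm
  simp only [Finset.mem_Icc] at hm
  have hc : Real.cos (2 * π * m / N) < 1 := ngon_cos_lt_one N m (by omega) (by omega)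
  have h1 : (1:ℝ) - Real.cos (2 * π * m / N) ≠ 0 := by linarith
  have h2 : (2:ℝ) - 2 * Real.cos (2 * π * m / N) = 2 * (1 - Real.cos (2 * π * m / N)) := by ring
  rw [h2]
  field_simp

lemma ngon_cos_Nsub1 (N m : ℕ) (hN : 0 < N) :
    Real.cos (2 * π * ((N-1:ℕ):ℝ) * m / N) = Real.cos (2 * π * m / N) := by
  have h1 : 2 * π * ((N-1:ℕ):ℝ) * m / N = 2 * π * ((((N:ℤ)-1)*m : ℤ):ℝ) / N := by
    push_cast [Nat.cast_sub (show 1 ≤ N by omega)]; ring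
  rw [h1, ngon_cos_int_congr N hN.ne' (((N:ℤ)-1)*m) (-(m:ℤ)) ⟨(m:ℤ), by ring⟩]
  rw [show 2 * π * (((-(m:ℤ)):ℤ):ℝ) / N = -(2 * π * m / N) by push_cast; ring, Real.cos_neg]

lemma ngon_ratio_sum_one (N j : ℕ) (hN : 4 ≤ N) (hj : j = 1 ∨ j = N - 1) :
    ∑ k ∈ Finset.Icc 1 (N-1),
        (1 - Real.cos (2 * π * j * k / N)) / (1 - Real.cos (2 * π * k / N))
      = (N:ℝ) - 1 := by
  have hcard : (Finset.Icc 1 (N-1)).card = N - 1 := by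
    rw [Nat.card_Icc]; omega
  have h1 : ∀ k ∈ Finset.Icc 1 (N-1),
      (1 - Real.cos (2 * π * j * k / N)) / (1 - Real.cos (2 * π * k / N)) = 1 := by
    intro k hk
    simp only [Finset.mem_Icc] at hk
    have hcos : Real.cos (2 * π * j * k / N) = Real.cos (2 * π * k / N) := by
      rcases hj with rfl | rfl
      · norm_num
      · exact ngon_cos_Nsub1 N k (by omega)
    rw [hcos]
    exact div_self (by have := ngon_cos_lt_one N k (by omega) (by omega); linarith)
  rw [Finset.sum_congr rfl h1, Finset.sum_const, hcard, nsmul_eq_mul, mul_one,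
    Nat.cast_sub (show 1 ≤ N by omega), Nat.cast_one]

lemma ngon_ratio_sum_pos (N j : ℕ) (hN : 4 ≤ N) (hj1 : 2 ≤ j) (hj2 : j ≤ N - 2) :
    0 < ∑ k ∈ Finset.Icc 1 (N-1),
        (1 - Real.cos (2 * π * j * k / N)) / (1 - Real.cos (2 * π * k / N)) := by
  apply Finset.sum_pos'
  · intro k hk
    simp only [Finset.mem_Icc] at hk
    have hden := ngon_cos_lt_one N k (by omega) (by omega)
    exact div_nonneg (by linarith [Real.cos_le_one (2 * π * j * k / N)]) (by linarith)
  · refine ⟨1, Finset.mem_Icc.mpr ⟨le_rfl, by omega⟩, ?_⟩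
    have hden := ngon_cos_lt_one N 1 one_pos (by omega)
    have hnum : Real.cos (2 * π * (j:ℝ) / N) < 1 := ngon_cos_lt_one N j (by omega) (by omega)
    simp only [Nat.cast_one, mul_one] at hden ⊢
    exact div_pos (by linarith) (by linarith)

lemma ngon_key_sum (N j : ℕ) (hN : 0 < N) (c : ℕ → ℝ)
    (hsym : ∀ m ∈ Finset.Icc 1 (N-1), c (N-m) = c m) :
    ∑ m ∈ Finset.Icc 1 (N-1), ((c m : ℂ) * (Complex.exp (2 * π * Complex.I * (j*m) / N) - 1))
      = ((∑ m ∈ Finset.Icc 1 (N-1), c m * (Real.cos (2 * π * j * m / N) - 1) : ℝ) : ℂ) := by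
  have hNR : (N:ℝ) ≠ 0 := Nat.cast_ne_zero.mpr hN.ne'
  have hterm : ∀ m ∈ Finset.Icc 1 (N-1),
      (c m : ℂ) * (Complex.exp (2 * π * Complex.I * (j*m) / N) - 1)
        = ((c m * (Real.cos (2 * π * j * m / N) - 1) : ℝ) : ℂ)
          + ((c m * Real.sin (2 * π * j * m / N) : ℝ) : ℂ) * Complex.I := by
    intro m _
    have hx : (2 * (π:ℂ) * Complex.I * (j*m) / N) = ((2 * π * j * m / N : ℝ) : ℂ) * Complex.I := by
      push_cast; field_simp
    rw [hx, Complex.exp_mul_I, ← Complex.ofReal_cos, ← Complex.ofReal_sin]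
    push_cast
    ring
  rw [Finset.sum_congr rfl hterm, Finset.sum_add_distrib, ← Finset.sum_mul,
    ← Complex.ofReal_sum, ← Complex.ofReal_sum]
  have hsin : ∀ m : ℕ, 1 ≤ m → m ≤ N - 1 →
      Real.sin (2 * π * j * ((N-m:ℕ):ℝ) / N) = - Real.sin (2 * π * j * m / N) := by
    intro m hm1 hm2
    have e1 : 2 * π * (j:ℝ) * ((N-m:ℕ):ℝ) / N = 2 * π * (((j:ℤ)*((N:ℤ)-m) : ℤ):ℝ) / N := by
      push_cast [Nat.cast_sub (show m ≤ N by omega)]; ring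
    have e2 : 2 * π * (((-(j*m:ℤ)) : ℤ):ℝ) / N = -(2 * π * j * m / N) := by
      push_cast; ring
    rw [e1, ngon_sin_int_congr N hN.ne' ((j:ℤ)*((N:ℤ)-m)) (-(j*m:ℤ)) ⟨(j:ℤ), by ring⟩, e2,
      Real.sin_neg]
  have him : ∑ m ∈ Finset.Icc 1 (N-1), c m * Real.sin (2 * π * j * m / N) = 0 := by
    apply Finset.sum_involution (fun m _ => N - m)
    · intro m hm
      simp only [Finset.mem_Icc] at hm
      rw [hsym m (Finset.mem_Icc.mpr hm), hsin m hm.1 hm.2]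
      ring
    · intro m hm hf hgm
      simp only [Finset.mem_Icc] at hm
      have hm2 : N = 2 * m := by omega
      apply hf
      have hNr : (N:ℝ) = 2 * m := by exact_mod_cast congrArg (fun t : ℕ => (t:ℝ)) hm2
      have hmne : (m:ℝ) ≠ 0 := Nat.cast_ne_zero.mpr (by omega)
      have : 2 * π * (j:ℝ) * m / N = (j:ℝ) * π := by
        rw [hNr]; field_simp
      rw [this, Real.sin_nat_mul_pi, mul_zero]
    · intro m hm
      simp only [Finset.mem_Icc] at hm ⊢
      omega
    · intro m hm
      simp only [Finset.mem_Icc] at hm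
      omega
  rw [him]
  simp

lemma ngon_fin_sub_dvd (N : ℕ) (i k : Fin N) :
    (N:ℤ) ∣ (((k:ℕ):ℤ) - ((i:ℕ):ℤ) - (((k - i : Fin N) : ℕ):ℤ)) := by
  have hN0 : 0 < N := i.pos
  have hval : ((k - i : Fin N) : ℕ) = (N - (i:ℕ) + (k:ℕ)) % N := by
    rw [Fin.sub_def]
  set a : ℕ := N - (i:ℕ) + (k:ℕ) with ha
  have h1 : (N:ℤ) ∣ (a:ℤ) - ((a % N : ℕ):ℤ) := by
    refine ⟨((a / N : ℕ) : ℤ), ?_⟩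
    have h := Nat.div_add_mod a N
    have h' : (N:ℤ) * ((a / N : ℕ):ℤ) + ((a % N : ℕ):ℤ) = (a:ℤ) := by exact_mod_cast h
    linarith
  have h2 : ((k:ℕ):ℤ) - ((i:ℕ):ℤ) - ((a % N : ℕ):ℤ)
      = ((a:ℤ) - ((a % N : ℕ):ℤ)) + (-(N:ℤ)) := by
    have hi : (i:ℕ) ≤ N := le_of_lt i.isLt
    push_cast [ha, Nat.cast_sub hi]
    ring
  rw [hval, h2]
  exact dvd_add h1 ⟨-1, by ring⟩

theorem ngon_hessian_eigenvectors
    (N : ℕ) (hN : 4 ≤ N) (H : Matrix (Fin N) (Fin N) ℝ)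
    (hoff : ∀ i j : Fin N, i ≠ j →
      H i j = - Real.cos (2 * π * (((i : ℕ) : ℝ) - ((j : ℕ) : ℝ)) / N)
        - 1 / (2 - 2 * Real.cos (2 * π * (((i : ℕ) : ℝ) - ((j : ℕ) : ℝ)) / N)))
    (hdiag : ∀ i : Fin N, H i i = - ∑ j ∈ Finset.univ.erase i, H i j)
    (b : ℕ → ℝ)
    (hb : ∀ j : ℕ, b j = (1 / 2) * ∑ k ∈ Finset.Icc 1 (N - 1),
      (1 - Real.cos (2 * π * j * k / N)) / (1 - Real.cos (2 * π * k / N)))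
    (lam : Fin N → ℝ)
    (hlam0 : ∀ j : Fin N, (j : ℕ) = 0 → lam j = 0)
    (hlam1 : ∀ j : Fin N, ((j : ℕ) = 1 ∨ (j : ℕ) = N - 1) → lam j = -1/2)
    (hlamb : ∀ j : Fin N, 2 ≤ (j : ℕ) → (j : ℕ) ≤ N - 2 → lam j = b j)
    (v : Fin N → Fin N → ℂ)
    (hv : ∀ j k : Fin N, v j k =
      Complex.exp (2 * (π : ℂ) * Complex.I * ((j : ℕ) : ℂ) * ((k : ℕ) : ℂ) / N)) :
    (∀ j : Fin N,
      (H.map (fun x : ℝ => (x : ℂ))).mulVec (v j) = ((lam j : ℝ) : ℂ) • v j) ∧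
    (∀ j : Fin N, 2 ≤ (j : ℕ) → (j : ℕ) ≤ N - 2 → 0 < lam j) ∧
    (Finset.univ.filter (fun j : Fin N => lam j = 0)).card = 1 ∧
    (Finset.univ.filter (fun j : Fin N => lam j = -1/2)).card = 2 ∧
    (Finset.univ.filter (fun j : Fin N => 0 < lam j)).card = N - 3 := by
  have hN0 : 0 < N := by omega
  haveI : NeZero N := ⟨hN0.ne'⟩
  have hNR : (N:ℝ) ≠ 0 := Nat.cast_ne_zero.mpr hN0.ne'
  -- the symbol function
  set c : ℕ → ℝ := fun m =>
    - Real.cos (2 * π * m / N) - 1 / (2 - 2 * Real.cos (2 * π * m / N)) with hc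
  have hcsym : ∀ m ∈ Finset.Icc 1 (N-1), c (N-m) = c m := by
    intro m hm
    simp only [Finset.mem_Icc] at hm
    have hcoseq : Real.cos (2 * π * ((N-m:ℕ):ℝ) / N) = Real.cos (2 * π * (m:ℝ) / N) := by
      have e1 : 2 * π * ((N-m:ℕ):ℝ) / N = 2 * π * ((((N:ℤ)-m) : ℤ):ℝ) / N := by
        push_cast [Nat.cast_sub (show m ≤ N by omega)]; ring
      rw [e1, ngon_cos_int_congr N hN0.ne' ((N:ℤ)-m) (-(m:ℤ)) ⟨1, by ring⟩]
      rw [show 2 * π * (((-(m:ℤ)):ℤ):ℝ) / N = -(2 * π * m / N) by push_cast; ring,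
        Real.cos_neg]
    simp only [hc, hcoseq]
  -- value of the Fourier symbol
  have hpos : ∀ j : Fin N, 2 ≤ (j : ℕ) → (j : ℕ) ≤ N - 2 → 0 < lam j := by
    intro j h1 h2
    rw [hlamb j h1 h2, hb]
    have := ngon_ratio_sum_pos N (j:ℕ) hN h1 h2
    linarith
  have hRsplit : ∀ jn : ℕ,
      (∑ m ∈ Finset.Icc 1 (N-1), c m * (Real.cos (2 * π * jn * m / N) - 1))
        = (∑ m ∈ Finset.Icc 1 (N-1),
            Real.cos (2 * π * m / N) * (1 - Real.cos (2 * π * jn * m / N)))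
          + (∑ m ∈ Finset.Icc 1 (N-1),
            (1 / (2 - 2 * Real.cos (2 * π * m / N))) * (1 - Real.cos (2 * π * jn * m / N))) := by
    intro jn
    rw [← Finset.sum_add_distrib]
    apply Finset.sum_congr rfl
    intro m _
    simp only [hc]
    ring
  have hRlam : ∀ j : Fin N,
      (∑ m ∈ Finset.Icc 1 (N-1), c m * (Real.cos (2 * π * (j:ℕ) * m / N) - 1)) = lam j := by
    intro j
    have hjlt : (j:ℕ) < N := j.isLt
    rcases (show (j:ℕ) = 0 ∨ ((j:ℕ) = 1 ∨ (j:ℕ) = N-1) ∨ (2 ≤ (j:ℕ) ∧ (j:ℕ) ≤ N-2) by omega)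
      with h0 | h1 | h2
    · rw [hlam0 j h0]
      apply Finset.sum_eq_zero
      intro m _
      rw [h0]
      norm_num
    · rw [hRsplit, ngon_S1_one N (j:ℕ) hN h1, ngon_second_part N (j:ℕ) hN,
        ngon_ratio_sum_one N (j:ℕ) hN h1, hlam1 j h1]
      ring
    · rw [hRsplit, ngon_S1_mid N (j:ℕ) hN h2.1 h2.2, ngon_second_part N (j:ℕ) hN,
        hlamb j h2.1 h2.2, hb]
      ring
  -- the eigenvector equation
  have hmain : ∀ j : Fin N,
      (H.map (fun x : ℝ => (x : ℂ))).mulVec (v j) = ((lam j : ℝ) : ℂ) • v j := by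
    intro j
    funext i
    have hvne : v j i ≠ 0 := by rw [hv]; exact Complex.exp_ne_zero _
    -- per-term rewriting on the erased sum
    have hterm : ∀ k ∈ Finset.univ.erase i,
        ((H i k : ℝ) : ℂ) * (v j k - v j i)
          = v j i * (((c ((k - i : Fin N) : ℕ) : ℝ) : ℂ)
              * (Complex.exp (2 * π * Complex.I * ((j:ℕ) * ((k - i : Fin N):ℕ)) / N) - 1)) := by
      intro k hk
      have hki : k ≠ i := Finset.ne_of_mem_erase hk
      set m : ℕ := ((k - i : Fin N) : ℕ) with hm
      have hmlt : m < N := (k - i).isLt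
      have hmne : m ≠ 0 := by
        intro h
        apply hki
        have : (k - i : Fin N) = 0 := Fin.ext (by simp [← hm, h])
        have := sub_eq_zero.mp this
        exact this
      have hdvd := ngon_fin_sub_dvd N i k
      -- H i k = c m
      have hH : H i k = c m := by
        rw [hoff i k (Ne.symm hki)]
        have hcoseq : Real.cos (2 * π * (((i:ℕ):ℝ) - ((k:ℕ):ℝ)) / N)
            = Real.cos (2 * π * (m:ℝ) / N) := by
          have e1 : 2 * π * (((i:ℕ):ℝ) - ((k:ℕ):ℝ)) / N
              = 2 * π *(((((i:ℕ):ℤ) - ((k:ℕ):ℤ)) : ℤ):ℝ) / N := by push_cast; ring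
          have hdvd2 : (N:ℤ) ∣ ((((i:ℕ):ℤ) - ((k:ℕ):ℤ)) - (-(m:ℤ))) := by
            rw [show (((i:ℕ):ℤ) - ((k:ℕ):ℤ)) - (-(m:ℤ))
                = -((((k:ℕ):ℤ) - ((i:ℕ):ℤ)) - ((m:ℕ):ℤ)) by ring]
            exact dvd_neg.mpr hdvd
          rw [e1, ngon_cos_int_congr N hN0.ne' (((i:ℕ):ℤ) - ((k:ℕ):ℤ)) (-(m:ℤ)) hdvd2]
          rw [show 2 * π * (((-(m:ℤ)):ℤ):ℝ) / N = -(2 * π * m / N) by push_cast; ring,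
            Real.cos_neg]
        rw [hcoseq]
      -- v j k = v j i * exp(...)
      have hvk : v j k = v j i * Complex.exp (2 * π * Complex.I * ((j:ℕ) * m) / N) := by
        rw [hv j k, hv j i, ← Complex.exp_add]
        have e1 : 2 * (π:ℂ) * Complex.I * ((j:ℕ):ℂ) * ((k:ℕ):ℂ) / N
            = 2 * π * Complex.I * ((((j:ℕ):ℤ) * ((k:ℕ):ℤ) : ℤ):ℂ) / N := by push_cast; ring
        have e2 : 2 * (π:ℂ) * Complex.I * ((j:ℕ):ℂ) * ((i:ℕ):ℂ) / N
              + 2 * π * Complex.I * (((j:ℕ):ℂ) * (m:ℂ)) / N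
            = 2 * π * Complex.I * ((((j:ℕ):ℤ) * ((i:ℕ):ℤ) + ((j:ℕ):ℤ) * (m:ℤ) : ℤ):ℂ) / N := by
          push_cast; field_simp
        rw [e1, e2]
        apply ngon_exp_int_congr N hN0.ne'
        have : (((j:ℕ):ℤ) * ((k:ℕ):ℤ)) - (((j:ℕ):ℤ) * ((i:ℕ):ℤ) + ((j:ℕ):ℤ) * (m:ℤ))
            = ((j:ℕ):ℤ) * ((((k:ℕ):ℤ) - ((i:ℕ):ℤ)) - (m:ℤ)) := by ring
        rw [this]
        exact Dvd.dvd.mul_left hdvd _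
      rw [hH, hvk]
      ring
    -- main computation
    have hlhs : (H.map (fun x : ℝ => (x : ℂ))).mulVec (v j) i
        = ∑ k ∈ Finset.univ.erase i, ((H i k : ℝ) : ℂ) * v j k + ((H i i : ℝ):ℂ) * v j i := by
      rw [Matrix.mulVec, dotProduct]
      rw [← Finset.sum_erase_add Finset.univ _ (Finset.mem_univ i)]
      simp [Matrix.map_apply]
    have hHii : ((H i i : ℝ) : ℂ) = -∑ k ∈ Finset.univ.erase i, ((H i k : ℝ):ℂ) := by
      have h := congrArg (fun x : ℝ => (x : ℂ)) (hdiag i)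
      simp only [Complex.ofReal_neg, Complex.ofReal_sum] at h
      exact h
    have hstep1 : ∑ k ∈ Finset.univ.erase i, ((H i k : ℝ) : ℂ) * v j k
          + ((H i i : ℝ):ℂ) * v j i
        = ∑ k ∈ Finset.univ.erase i, ((H i k : ℝ) : ℂ) * (v j k - v j i) := by
      rw [hHii]
      rw [Finset.sum_congr rfl (fun k _ => mul_sub (((H i k : ℝ)):ℂ) (v j k) (v j i)),
        Finset.sum_sub_distrib, ← Finset.sum_mul]
      ring
    have hstep2 : ∑ k ∈ Finset.univ.erase i, ((H i k : ℝ) : ℂ) * (v j k - v j i)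
        = ∑ m ∈ Finset.Icc 1 (N-1), v j i * (((c m : ℝ) : ℂ)
            * (Complex.exp (2 * π * Complex.I * ((j:ℕ) * m) / N) - 1)) := by
      apply Finset.sum_nbij' (fun k => ((k - i : Fin N) : ℕ))
        (fun m => i + (⟨m % N, Nat.mod_lt m hN0⟩ : Fin N))
      · intro k hk
        have hki : k ≠ i := Finset.ne_of_mem_erase hk
        have hmlt : ((k - i : Fin N) : ℕ) < N := (k - i).isLt
        have hmne : ((k - i : Fin N) : ℕ) ≠ 0 := by
          intro h
          exact hki (sub_eq_zero.mp (Fin.ext (by simp [h])))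
        simp only [Finset.mem_Icc]
        omega
      · intro m hm
        simp only [Finset.mem_Icc] at hm
        have hmmod : m % N = m := Nat.mod_eq_of_lt (by omega)
        apply Finset.mem_erase.mpr
        constructor
        · intro h
          have : (⟨m % N, Nat.mod_lt m hN0⟩ : Fin N) = 0 := by
            have := add_eq_left.mp h
            exact this
          have := congrArg Fin.val this
          simp [hmmod] at this
          omega
        · exact Finset.mem_univ _
      · intro k hk
        have : (⟨((k - i : Fin N) : ℕ) % N, Nat.mod_lt _ hN0⟩ : Fin N) = k - i :=
          Fin.ext (by simp [Nat.mod_eq_of_lt (k - i).isLt])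
        rw [this, add_comm, sub_add_cancel]
      · intro m hm
        simp only [Finset.mem_Icc] at hm
        have hmmod : m % N = m := Nat.mod_eq_of_lt (by omega)
        rw [add_sub_cancel_left]
        simp [hmmod]
      · exact hterm
    rw [Pi.smul_apply, smul_eq_mul, hlhs, hstep1, hstep2, ← Finset.mul_sum,
      ngon_key_sum N (j:ℕ) hN0 c hcsym, hRlam j, mul_comm]
  -- classification of eigenvalues
  have htri : ∀ x : Fin N,
      ((x:ℕ) = 0 ∧ lam x = 0) ∨ (((x:ℕ) = 1 ∨ (x:ℕ) = N-1) ∧ lam x = -1/2)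
        ∨ ((2 ≤ (x:ℕ) ∧ (x:ℕ) ≤ N-2) ∧ 0 < lam x) := by
    intro x
    have hxlt : (x:ℕ) < N := x.isLt
    rcases (show (x:ℕ) = 0 ∨ ((x:ℕ) = 1 ∨ (x:ℕ) = N-1) ∨ (2 ≤ (x:ℕ) ∧ (x:ℕ) ≤ N-2) by omega)
      with h0 | h1 | h2
    · exact Or.inl ⟨h0, hlam0 x h0⟩
    · exact Or.inr (Or.inl ⟨h1, hlam1 x h1⟩)
    · exact Or.inr (Or.inr ⟨h2, hpos x h2.1 h2.2⟩)
  refine ⟨hmain, hpos, ?_, ?_, ?_⟩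
  · -- exactly one zero eigenvalue
    have : Finset.univ.filter (fun j : Fin N => lam j = 0) = {(⟨0, hN0⟩ : Fin N)} := by
      ext x
      simp only [Finset.mem_filter, Finset.mem_univ, true_and, Finset.mem_singleton]
      constructor
      · intro h
        rcases htri x with ⟨h0, _⟩ | ⟨_, hl⟩ | ⟨_, hl⟩
        · exact Fin.ext h0
        · rw [h] at hl; norm_num at hl
        · rw [h] at hl; norm_num at hl
      · intro h
        exact hlam0 x (by rw [h])
    rw [this, Finset.card_singleton]
  · -- eigenvalue -1/2 with multiplicity 2
    have : Finset.univ.filter (fun j : Fin N => lam j = -1/2)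
        = {(⟨1, by omega⟩ : Fin N), (⟨N-1, by omega⟩ : Fin N)} := by
      ext x
      simp only [Finset.mem_filter, Finset.mem_univ, true_and, Finset.mem_insert,
        Finset.mem_singleton]
      constructor
      · intro h
        rcases htri x with ⟨_, hl⟩ | ⟨h1, _⟩ | ⟨_, hl⟩
        · rw [h] at hl; norm_num at hl
        · rcases h1 with h1 | h1
          · exact Or.inl (Fin.ext h1)
          · exact Or.inr (Fin.ext h1)
        · rw [h] at hl; norm_num at hl
      · intro h
        rcases h with rfl | rfl
        · exact hlam1 _ (Or.inl rfl)
        · exact hlam1 _ (Or.inr rfl)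
    rw [this, Finset.card_insert_of_notMem (by
      simp only [Finset.mem_singleton]
      intro h
      have := congrArg Fin.val h
      simp at this
      omega), Finset.card_singleton]
  · -- N-3 positive eigenvalues
    have hset : Finset.univ.filter (fun j : Fin N => 0 < lam j)
        = Finset.univ \ {(⟨0, hN0⟩ : Fin N), (⟨1, by omega⟩ : Fin N), (⟨N-1, by omega⟩ : Fin N)} := by
      ext x
      simp only [Finset.mem_filter, Finset.mem_univ, true_and, Finset.mem_sdiff,
        Finset.mem_insert, Finset.mem_singleton, not_or]
      constructor
      · intro h
        rcases htri x with ⟨h0, hl⟩ | ⟨h1, hl⟩ | ⟨h2, _⟩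
        · rw [hl] at h; norm_num at h
        · rw [hl] at h; norm_num at h
        · refine ⟨?_, ?_, ?_⟩ <;>
            (intro hh; have hval := congrArg Fin.val hh; simp only [] at hval; omega)
      · intro hx
        rcases htri x with ⟨h0, hl⟩ | ⟨h1, hl⟩ | ⟨h2, hl⟩
        · exact absurd (Fin.ext h0) hx.1
        · rcases h1 with h1 | h1
          · exact absurd (Fin.ext h1) hx.2.1
          · exact absurd (Fin.ext h1) hx.2.2
        · exact hl
    rw [hset, Finset.card_sdiff_of_subset (Finset.subset_univ _)]
    have h1N : (⟨1, by omega⟩ : Fin N) ∉ ({(⟨N-1, by omega⟩ : Fin N)} : Finset (Fin N)) := by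
      simp only [Finset.mem_singleton]
      intro h
      have hval := congrArg Fin.val h
      simp only [] at hval
      omega
    have h01 : (⟨0, hN0⟩ : Fin N)
        ∉ ({(⟨1, by omega⟩ : Fin N), (⟨N-1, by omega⟩ : Fin N)} : Finset (Fin N)) := by
      simp only [Finset.mem_insert, Finset.mem_singleton]
      rintro (h | h) <;> (have hval := congrArg Fin.val h; simp only [] at hval; omega)
    have hcard3 : ({(⟨0, hN0⟩ : Fin N), (⟨1, by omega⟩ : Fin N), (⟨N-1, by omega⟩ : Fin N)}
        : Finset (Fin N)).card = 3 := by
      rw [Finset.card_insert_of_notMem h01, Finset.card_insert_of_notMem h1N,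
        Finset.card_singleton]
    rw [hcard3, Finset.card_univ, Fintype.card_fin]
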